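/- Let A be a formally real integral domain which is an ℝ-algebra. Let I₀, M₀ be ℝ-linearly independent imaginary units with a, b, J₀, K₀ as in Notation 5.1, and assume a ≠ 0 (I₀ and M₀ not orthogonal). Let h = h₀ + h₁·ι(I₀) with h₀, h₁ ∈ A, h₁ ≠ 0, set h^s := h₀² + h₁², and let f ∈ Quaternion A be not I₀-sliced. Then h * f * star h is M₀-sliced if and only if there exist f₀, ρ, u, w ∈ A with h^s·u = ρ·(h₀² − h₁²), h^s·w = ρ·h₀·h₁, and f = f₀ + a·ρ·ι(I₀) + b·u·ι(J₀) − 2b·w·ι(K₀) (real scalars acting via algebraMap ℝ A). (Theorem 5.6, case (ii).) -/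

import Mathlib

open Quaternion

/-- The componentwise extension `ι : ℍ[ℝ] → ℍ[A]` of `algebraMap ℝ A`. -/
noncomputable def qmap {A : Type*} [CommRing A] [Algebra ℝ A] (q : Quaternion ℝ) :
    Quaternion A :=
  ⟨algebraMap ℝ A q.re, algebraMap ℝ A q.imI, algebraMap ℝ A q.imJ, algebraMap ℝ A q.imK⟩

/-- An imaginary unit: a real quaternion with zero real part squaring to `-1`. -/
def IsImaginaryUnit (I : Quaternion ℝ) : Prop := I.re = 0 ∧ I ^ 2 = -1

/-- `q` is `I`-sliced if `q = a + b·ι(I)` for some `a, b ∈ A`. -/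
noncomputable def IsSliced {A : Type*} [CommRing A] [Algebra ℝ A]
    (I : Quaternion ℝ) (q : Quaternion A) : Prop :=
  ∃ a b : A, q = (a : Quaternion A) + (b : Quaternion A) * qmap I

/-- `A` is formally real: a sum of four squares vanishes only trivially. -/
def FormallyRealFour (A : Type*) [CommRing A] : Prop :=
  ∀ a b c d : A, a ^ 2 + b ^ 2 + c ^ 2 + d ^ 2 = 0 → a = 0 ∧ b = 0 ∧ c = 0 ∧ d = 0

section Aux

variable {A : Type*} [CommRing A] [Algebra ℝ A]

@[simp] lemma qmap_re (q : Quaternion ℝ) : (qmap q : Quaternion A).re = algebraMap ℝ A q.re := rfl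
@[simp] lemma qmap_imI (q : Quaternion ℝ) : (qmap q : Quaternion A).imI = algebraMap ℝ A q.imI := rfl
@[simp] lemma qmap_imJ (q : Quaternion ℝ) : (qmap q : Quaternion A).imJ = algebraMap ℝ A q.imJ := rfl
@[simp] lemma qmap_imK (q : Quaternion ℝ) : (qmap q : Quaternion A).imK = algebraMap ℝ A q.imK := rfl

lemma qmap_mul (p q : Quaternion ℝ) : (qmap (p * q) : Quaternion A) = qmap p * qmap q := by
  ext <;> simp [Quaternion.re_mul, Quaternion.imI_mul, Quaternion.imJ_mul, Quaternion.imK_mul]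

lemma qmap_neg (q : Quaternion ℝ) : (qmap (-q) : Quaternion A) = - qmap q := by
  ext <;> simp

lemma qmap_one : (qmap 1 : Quaternion A) = 1 := by
  ext <;> simp

/-- The key product computation in any `A`-algebra with a quaternionic triple. -/
theorem prodlem {A R : Type*} [CommRing A] [Ring R] [Algebra A R] (I J K : R)
    (hII : I*I = -1) (hIJ : I*J = K) (hJI : J*I = -K) (hIK : I*K = -J) (hKI : K*I = J)
    (h₀ h₁ c₀ c₁ c₂ c₃ : A) :
    (h₀ • 1 + h₁ • I) * (c₀ • (1:R) + c₁ • I + c₂ • J + c₃ • K) * (h₀ • 1 - h₁ • I)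
    = ((h₀^2+h₁^2)*c₀) • 1 + ((h₀^2+h₁^2)*c₁) • I
      + ((h₀^2-h₁^2)*c₂ - 2*h₀*h₁*c₃) • J + ((h₀^2-h₁^2)*c₃ + 2*h₀*h₁*c₂) • K := by
  simp only [add_mul, mul_add, sub_mul, mul_sub, smul_mul_assoc, mul_smul_comm, one_mul,
    mul_one, mul_assoc, hII, hIJ, hJI, hIK, hKI, mul_neg, neg_mul, smul_neg, neg_neg, mul_one]
  module

end Aux

set_option maxHeartbeats 4000000 in
theorem conjugated_sliced_iff_nonorthogonal_case
    {A : Type*} [CommRing A] [IsDomain A] [Algebra ℝ A] (hFR : FormallyRealFour A)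
    (I₀ M₀ : Quaternion ℝ) (hI₀ : IsImaginaryUnit I₀) (hM₀ : IsImaginaryUnit M₀)
    (hind : LinearIndependent ℝ ![I₀, M₀])
    (a b : ℝ) (J₀ K₀ : Quaternion ℝ)
    (ha : a = I₀.imI * M₀.imI + I₀.imJ * M₀.imJ + I₀.imK * M₀.imK)
    (hb : b = Real.sqrt (1 - a ^ 2))
    (hK₀ : K₀ = (2 * b)⁻¹ • (I₀ * M₀ - M₀ * I₀))
    (hJ₀ : J₀ = K₀ * I₀)
    (hanz : a ≠ 0)
    (h₀ h₁ : A) (hh₁ : h₁ ≠ 0) (h : Quaternion A)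
    (hh : h = (h₀ : Quaternion A) + (h₁ : Quaternion A) * qmap I₀)
    (hs : A) (hhs : hs = h₀ ^ 2 + h₁ ^ 2)
    (f : Quaternion A) (hf : ¬ IsSliced I₀ f) :
    IsSliced M₀ (h * f * star h) ↔
      ∃ f₀ ρ u w : A,
        hs * u = ρ * (h₀ ^ 2 - h₁ ^ 2) ∧
        hs * w = ρ * h₀ * h₁ ∧
        f = (f₀ : Quaternion A)
            + ((algebraMap ℝ A a * ρ : A) : Quaternion A) * qmap I₀
            + ((algebraMap ℝ A b * u : A) : Quaternion A) * qmap J₀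
            - ((2 * (algebraMap ℝ A b * w) : A) : Quaternion A) * qmap K₀ := by
  subst hhs
  obtain ⟨hre, hsq⟩ := hI₀
  obtain ⟨hmre, hmsq⟩ := hM₀
  set i1 := I₀.imI with di1; set i2 := I₀.imJ with di2; set i3 := I₀.imK with di3
  set m1 := M₀.imI with dm1; set m2 := M₀.imJ with dm2; set m3 := M₀.imK with dm3
  -- ## Real scalar groundwork
  have hi : i1^2 + i2^2 + i3^2 = 1 := by
    have := congrArg QuaternionAlgebra.re hsq
    rw [pow_two] at this
    simp [Quaternion.re_mul, hre] at this
    linarith [this]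
  have hm : m1^2 + m2^2 + m3^2 = 1 := by
    have := congrArg QuaternionAlgebra.re hmsq
    rw [pow_two] at this
    simp [Quaternion.re_mul, hmre] at this
    linarith [this]
  have key : 1 - a^2 = (i1*m2-i2*m1)^2 + (i1*m3-i3*m1)^2 + (i2*m3-i3*m2)^2 := by
    linear_combination (-(m1^2+m2^2+m3^2))*hi - hm - (a + (i1*m1+i2*m2+i3*m3))*ha
  have hale : a^2 ≤ 1 := by
    nlinarith [sq_nonneg (i1*m2-i2*m1), sq_nonneg (i1*m3-i3*m1), sq_nonneg (i2*m3-i3*m2)]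
  have hane : a^2 ≠ 1 := by
    intro haa
    have e : (m1 - a*i1)^2 + (m2 - a*i2)^2 + (m3 - a*i3)^2 = 0 := by
      linear_combination hm + a^2*hi + 2*a*ha - haa
    have sq0 : ∀ x : ℝ, x^2 ≤ 0 → x = 0 := fun x hx =>
      (pow_eq_zero_iff two_ne_zero).mp (le_antisymm hx (sq_nonneg x))
    have e1 : m1 = a*i1 := by
      have := sq0 (m1 - a*i1) (by linarith [sq_nonneg (m2 - a*i2), sq_nonneg (m3 - a*i3)])
      linarith
    have e2 : m2 = a*i2 := by
      have := sq0 (m2 - a*i2) (by linarith [sq_nonneg (m1 - a*i1), sq_nonneg (m3 - a*i3)])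
      linarith
    have e3 : m3 = a*i3 := by
      have := sq0 (m3 - a*i3) (by linarith [sq_nonneg (m1 - a*i1), sq_nonneg (m2 - a*i2)])
      linarith
    have hM : a • I₀ + (-1 : ℝ) • M₀ = 0 := by
      ext <;> simp [hre, hmre, ← di1, ← di2, ← di3, ← dm1, ← dm2, ← dm3, ← e1, ← e2, ← e3]
    exact one_ne_zero (neg_eq_zero.mp ((LinearIndependent.pair_iff.mp hind a (-1) hM).2))
  have h1a : 0 < 1 - a^2 := lt_of_le_of_ne (by linarith) (fun hcon => hane (by linarith))
  have hbpos : 0 < b := by rw [hb]; exact Real.sqrt_pos.mpr h1a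
  have hb2 : b^2 = 1 - a^2 := by rw [hb]; exact Real.sq_sqrt (le_of_lt h1a)
  have hbne : b ≠ 0 := ne_of_gt hbpos
  -- components of K₀ and J₀
  have hK0re : K₀.re = 0 := by
    rw [hK₀]
    simp only [Quaternion.re_smul, Quaternion.re_sub, Quaternion.re_mul, smul_eq_mul]
    ring
  have hbk1 : b * K₀.imI = i2*m3 - i3*m2 := by
    rw [hK₀]; simp [Quaternion.imI_mul]; field_simp; ring
  have hbk2 : b * K₀.imJ = i3*m1 - i1*m3 := by
    rw [hK₀]; simp [Quaternion.imJ_mul]; field_simp; ring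
  have hbk3 : b * K₀.imK = i1*m2 - i2*m1 := by
    rw [hK₀]; simp [Quaternion.imK_mul]; field_simp; ring
  set k1 := K₀.imI with dk1; set k2 := K₀.imJ with dk2; set k3 := K₀.imK with dk3
  have hJ0re : J₀.re = 0 := by
    have hbre : b * J₀.re = 0 := by
      rw [hJ₀]
      have : J₀.re = 0 * 0 - k1*i1 - k2*i2 - k3*i3 := by
        rw [hJ₀, Quaternion.re_mul, hK0re, hre]
      rw [← hJ₀, this]
      linear_combination (-i1)*hbk1 - i2*hbk2 - i3*hbk3
    exact (mul_eq_zero.mp hbre).resolve_left hbne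
  have hj1 : J₀.imI = k2*i3 - k3*i2 := by
    rw [hJ₀, Quaternion.imI_mul, hK0re, hre]; ring
  have hj2 : J₀.imJ = k3*i1 - k1*i3 := by
    rw [hJ₀, Quaternion.imJ_mul, hK0re, hre]; ring
  have hj3 : J₀.imK = k1*i2 - k2*i1 := by
    rw [hJ₀, Quaternion.imK_mul, hK0re, hre]; ring
  set j1 := J₀.imI with dj1; set j2 := J₀.imJ with dj2; set j3 := J₀.imK with dj3
  -- row relations
  have key2 : (i2*m3-i3*m2)^2 + (i3*m1-i1*m3)^2 + (i1*m2-i2*m1)^2 = b^2 := by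
    linear_combination -key - hb2
  have rKK : k1^2 + k2^2 + k3^2 = 1 := by
    have hb2' : b^2 * (k1^2+k2^2+k3^2) = b^2 * 1 := by
      linear_combination (b*k1 + (i2*m3-i3*m2))*hbk1 + (b*k2 + (i3*m1-i1*m3))*hbk2
        + (b*k3 + (i1*m2-i2*m1))*hbk3 + key2
    exact mul_left_cancel₀ (pow_ne_zero 2 hbne) hb2'
  have rIK : i1*k1 + i2*k2 + i3*k3 = 0 := by
    have : b * (i1*k1 + i2*k2 + i3*k3) = b * 0 := by
      linear_combination i1*hbk1 + i2*hbk2 + i3*hbk3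
    exact mul_left_cancel₀ hbne this
  have rIJ : i1*j1 + i2*j2 + i3*j3 = 0 := by
    rw [hj1, hj2, hj3]; ring
  have rJK : j1*k1 + j2*k2 + j3*k3 = 0 := by
    rw [hj1, hj2, hj3]; ring
  have rJJ : j1^2 + j2^2 + j3^2 = 1 := by
    rw [hj1, hj2, hj3]
    linear_combination (i1^2+i2^2+i3^2)*rKK + hi - (i1*k1+i2*k2+i3*k3)*rIK
  -- M₀ = a I₀ + b J₀
  have hbj1 : b * j1 = m1 - a*i1 := by
    linear_combination i3*hbk2 - i2*hbk3 + m1*hi + i1*ha + b*hj1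
  have hbj2 : b * j2 = m2 - a*i2 := by
    linear_combination i1*hbk3 - i3*hbk1 + m2*hi + i2*ha + b*hj2
  have hbj3 : b * j3 = m3 - a*i3 := by
    linear_combination i2*hbk1 - i1*hbk2 + m3*hi + i3*ha + b*hj3
  have hM0 : M₀ = a • I₀ + b • J₀ := by
    ext <;> simp [hre, hmre, hJ0re] <;>
      first
        | linear_combination -hbj1
        | linear_combination -hbj2
        | linear_combination -hbj3
  -- column relations
  have hRRT : (!![i1,i2,i3; j1,j2,j3; k1,k2,k3] : Matrix (Fin 3) (Fin 3) ℝ)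
      * (!![i1,j1,k1; i2,j2,k2; i3,j3,k3] : Matrix (Fin 3) (Fin 3) ℝ) = 1 := by
    ext s t
    fin_cases s <;> fin_cases t <;>
      simp [Matrix.mul_apply, Fin.sum_univ_three, Matrix.one_apply] <;>
      first
        | linear_combination hi
        | linear_combination rJJ
        | linear_combination rKK
        | linear_combination rIJ
        | linear_combination rIK
        | linear_combination rJK
  have hCol := mul_eq_one_comm.mp hRRT
  have colfun : ∀ s t, ((!![i1,j1,k1; i2,j2,k2; i3,j3,k3] : Matrix (Fin 3) (Fin 3) ℝ)
      * (!![i1,i2,i3; j1,j2,j3; k1,k2,k3] : Matrix (Fin 3) (Fin 3) ℝ)) s t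
      = (1 : Matrix (Fin 3) (Fin 3) ℝ) s t := by
    intro s t; rw [hCol]
  have col11 : i1*i1 + j1*j1 + k1*k1 = 1 := by
    have := colfun 0 0; simpa [Matrix.mul_apply, Fin.sum_univ_three, Matrix.one_apply] using this
  have col22 : i2*i2 + j2*j2 + k2*k2 = 1 := by
    have := colfun 1 1; simpa [Matrix.mul_apply, Fin.sum_univ_three, Matrix.one_apply] using this
  have col33 : i3*i3 + j3*j3 + k3*k3 = 1 := by
    have := colfun 2 2; simpa [Matrix.mul_apply, Fin.sum_univ_three, Matrix.one_apply] using this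
  have col12 : i1*i2 + j1*j2 + k1*k2 = 0 := by
    have := colfun 0 1; simpa [Matrix.mul_apply, Fin.sum_univ_three, Matrix.one_apply] using this
  have col13 : i1*i3 + j1*j3 + k1*k3 = 0 := by
    have := colfun 0 2; simpa [Matrix.mul_apply, Fin.sum_univ_three, Matrix.one_apply] using this
  have col23 : i2*i3 + j2*j3 + k2*k3 = 0 := by
    have := colfun 1 2; simpa [Matrix.mul_apply, Fin.sum_univ_three, Matrix.one_apply] using this
  -- ## Quaternion relations over ℝ
  have rII : I₀ * I₀ = -1 := by rw [← pow_two]; exact hsq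
  have rIKI : I₀ * K₀ * I₀ = K₀ := by
    rw [hK₀, mul_smul_comm, smul_mul_assoc]
    congr 1
    have expand : I₀ * (I₀*M₀ - M₀*I₀) * I₀ = (I₀*I₀)*(M₀*I₀) - (I₀*M₀)*(I₀*I₀) := by
      noncomm_ring
    rw [expand, rII]
    noncomm_ring
  have rKI : K₀ * I₀ = J₀ := hJ₀.symm
  have rIJq : I₀ * J₀ = K₀ := by rw [hJ₀, ← mul_assoc]; exact rIKI
  have rJIq : J₀ * I₀ = -K₀ := by rw [hJ₀, mul_assoc, rII, mul_neg_one]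
  have rIKq : I₀ * K₀ = -J₀ := by
    have e : I₀ * K₀ * I₀ * I₀ = J₀ := by rw [rIKI]; exact hJ₀.symm
    rw [mul_assoc, rII, mul_neg_one] at e
    exact neg_eq_iff_eq_neg.mp e
  -- mapped relations in ℍ[A]
  have qmap_negone : (qmap (-1) : Quaternion A) = -1 := by ext <;> simp
  have qII : (qmap I₀ : Quaternion A) * qmap I₀ = -1 := by
    rw [← qmap_mul, rII, qmap_negone]
  have qIJ : (qmap I₀ : Quaternion A) * qmap J₀ = qmap K₀ := by rw [← qmap_mul, rIJq]
  have qJI : (qmap J₀ : Quaternion A) * qmap I₀ = -(qmap K₀) := by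
    rw [← qmap_mul, rJIq, qmap_neg]
  have qIK : (qmap I₀ : Quaternion A) * qmap K₀ = -(qmap J₀) := by
    rw [← qmap_mul, rIKq, qmap_neg]
  have qKI : (qmap K₀ : Quaternion A) * qmap I₀ = qmap J₀ := by rw [← qmap_mul, rKI]
  -- coe/smul conversion
  have cosmul : ∀ (x : A) (q : Quaternion A), (x : Quaternion A) * q = x • q :=
    fun x q => Quaternion.coe_mul_eq_smul x q
  have co1 : ∀ x : A, (x : Quaternion A) = x • (1 : Quaternion A) := fun x => by
    rw [← cosmul, mul_one]
  -- star of h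
  have hstarI : star (qmap I₀ : Quaternion A) = -(qmap I₀) := by
    ext <;> simp [hre]
  have hstar : star h = (↑h₀ : Quaternion A) - (↑h₁ : Quaternion A) * qmap I₀ := by
    have hcomm : (qmap I₀ : Quaternion A) * (↑h₁ : Quaternion A) = (↑h₁ : Quaternion A) * qmap I₀ :=
      (Quaternion.coe_commutes h₁ (qmap I₀)).symm
    rw [hh, star_add, star_mul, hstarI, Quaternion.star_coe, Quaternion.star_coe,
      neg_mul, hcomm, sub_eq_add_neg]
  -- the general product formula
  have hprodgen : ∀ c₀ c₁ c₂ c₃ : A,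
      h * ((↑c₀ : Quaternion A) + (↑c₁ : Quaternion A) * qmap I₀ + (↑c₂ : Quaternion A) * qmap J₀ + (↑c₃ : Quaternion A) * qmap K₀) * star h
      = (((h₀^2+h₁^2)*c₀ : A) : Quaternion A) + (((h₀^2+h₁^2)*c₁ : A) : Quaternion A) * qmap I₀
        + (((h₀^2-h₁^2)*c₂ - 2*h₀*h₁*c₃ : A) : Quaternion A) * qmap J₀
        + (((h₀^2-h₁^2)*c₃ + 2*h₀*h₁*c₂ : A) : Quaternion A) * qmap K₀ := by
    intro c₀ c₁ c₂ c₃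
    have L : ((↑h₀ : Quaternion A) + (↑h₁ : Quaternion A) * qmap I₀) = h₀ • 1 + h₁ • qmap I₀ := by
      rw [cosmul, co1]
    have Lf : ((↑c₀ : Quaternion A) + (↑c₁ : Quaternion A) * qmap I₀ + (↑c₂ : Quaternion A) * qmap J₀ + (↑c₃ : Quaternion A) * qmap K₀)
        = c₀ • 1 + c₁ • qmap I₀ + c₂ • qmap J₀ + c₃ • qmap K₀ := by
      rw [cosmul, cosmul, cosmul, co1]
    have Ls : ((↑h₀ : Quaternion A) - (↑h₁ : Quaternion A) * qmap I₀) = h₀ • 1 - h₁ • qmap I₀ := by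
      rw [cosmul, co1]
    rw [hstar, hh, L, Lf, Ls, prodlem (qmap I₀) (qmap J₀) (qmap K₀) qII qIJ qJI qIK qKI]
    rw [cosmul, cosmul, cosmul, co1]
  -- component extraction
  have Xre : ∀ c₀ c₁ c₂ c₃ : A,
      ((↑c₀ : Quaternion A) + (↑c₁ : Quaternion A) * qmap I₀ + (↑c₂ : Quaternion A) * qmap J₀
        + (↑c₃ : Quaternion A) * qmap K₀).re = c₀ := by
    intro c₀ c₁ c₂ c₃
    simp [hre, hJ0re, hK0re]
  have XimI : ∀ c₀ c₁ c₂ c₃ : A,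
      ((↑c₀ : Quaternion A) + (↑c₁ : Quaternion A) * qmap I₀ + (↑c₂ : Quaternion A) * qmap J₀
        + (↑c₃ : Quaternion A) * qmap K₀).imI
      = c₁ * algebraMap ℝ A i1 + c₂ * algebraMap ℝ A j1 + c₃ * algebraMap ℝ A k1 := by
    intro c₀ c₁ c₂ c₃
    simp [← di1, ← dj1, ← dk1]
  have XimJ : ∀ c₀ c₁ c₂ c₃ : A,
      ((↑c₀ : Quaternion A) + (↑c₁ : Quaternion A) * qmap I₀ + (↑c₂ : Quaternion A) * qmap J₀
        + (↑c₃ : Quaternion A) * qmap K₀).imJ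
      = c₁ * algebraMap ℝ A i2 + c₂ * algebraMap ℝ A j2 + c₃ * algebraMap ℝ A k2 := by
    intro c₀ c₁ c₂ c₃
    simp [← di2, ← dj2, ← dk2]
  have XimK : ∀ c₀ c₁ c₂ c₃ : A,
      ((↑c₀ : Quaternion A) + (↑c₁ : Quaternion A) * qmap I₀ + (↑c₂ : Quaternion A) * qmap J₀
        + (↑c₃ : Quaternion A) * qmap K₀).imK
      = c₁ * algebraMap ℝ A i3 + c₂ * algebraMap ℝ A j3 + c₃ * algebraMap ℝ A k3 := by
    intro c₀ c₁ c₂ c₃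
    simp [← di3, ← dj3, ← dk3]
  -- mapped scalar relations
  have map3 : ∀ x1 x2 x3 y1 y2 y3 r : ℝ, x1*y1 + x2*y2 + x3*y3 = r →
      algebraMap ℝ A x1 * algebraMap ℝ A y1 + algebraMap ℝ A x2 * algebraMap ℝ A y2
        + algebraMap ℝ A x3 * algebraMap ℝ A y3 = algebraMap ℝ A r := by
    intro x1 x2 x3 y1 y2 y3 r hr
    rw [← map_mul, ← map_mul, ← map_mul, ← map_add, ← map_add, hr]
  have Chii := map3 i1 i2 i3 i1 i2 i3 1 (by linear_combination hi)
  have Chjj := map3 j1 j2 j3 j1 j2 j3 1 (by linear_combination rJJ)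
  have Chkk := map3 k1 k2 k3 k1 k2 k3 1 (by linear_combination rKK)
  have Chij := map3 i1 i2 i3 j1 j2 j3 0 (by linear_combination rIJ)
  have Chik := map3 i1 i2 i3 k1 k2 k3 0 (by linear_combination rIK)
  have Chjk := map3 j1 j2 j3 k1 k2 k3 0 (by linear_combination rJK)
  have Ccol11 := map3 i1 j1 k1 i1 j1 k1 1 (by linear_combination col11)
  have Ccol22 := map3 i2 j2 k2 i2 j2 k2 1 (by linear_combination col22)
  have Ccol33 := map3 i3 j3 k3 i3 j3 k3 1 (by linear_combination col33)
  have Ccol12 := map3 i1 j1 k1 i2 j2 k2 0 (by linear_combination col12)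
  have Ccol13 := map3 i1 j1 k1 i3 j3 k3 0 (by linear_combination col13)
  have Ccol23 := map3 i2 j2 k2 i3 j3 k3 0 (by linear_combination col23)
  rw [map_one] at Chii Chjj Chkk Ccol11 Ccol22 Ccol33
  rw [map_zero] at Chij Chik Chjk Ccol12 Ccol13 Ccol23
  -- decomposition of f
  set φ1 : A := algebraMap ℝ A i1 * f.imI + algebraMap ℝ A i2 * f.imJ
      + algebraMap ℝ A i3 * f.imK with dφ1
  set φ2 : A := algebraMap ℝ A j1 * f.imI + algebraMap ℝ A j2 * f.imJ
      + algebraMap ℝ A j3 * f.imK with dφ2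
  set φ3 : A := algebraMap ℝ A k1 * f.imI + algebraMap ℝ A k2 * f.imJ
      + algebraMap ℝ A k3 * f.imK with dφ3
  have hdec : f = (↑f.re : Quaternion A) + (↑φ1 : Quaternion A) * qmap I₀
      + (↑φ2 : Quaternion A) * qmap J₀ + (↑φ3 : Quaternion A) * qmap K₀ := by
    ext
    · rw [Xre]
    · rw [XimI, dφ1, dφ2, dφ3]
      linear_combination (-f.imI)*Ccol11 - f.imJ*Ccol12 - f.imK*Ccol13
    · rw [XimJ, dφ1, dφ2, dφ3]
      linear_combination (-f.imI)*Ccol12 - f.imJ*Ccol22 - f.imK*Ccol23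
    · rw [XimK, dφ1, dφ2, dφ3]
      linear_combination (-f.imI)*Ccol13 - f.imJ*Ccol23 - f.imK*Ccol33
  -- uniqueness of coefficients
  have uniq : ∀ c₀ c₁ c₂ c₃ d₀ d₁ d₂ d₃ : A,
      ((↑c₀ : Quaternion A) + (↑c₁ : Quaternion A) * qmap I₀ + (↑c₂ : Quaternion A) * qmap J₀
        + (↑c₃ : Quaternion A) * qmap K₀)
      = ((↑d₀ : Quaternion A) + (↑d₁ : Quaternion A) * qmap I₀ + (↑d₂ : Quaternion A) * qmap J₀
        + (↑d₃ : Quaternion A) * qmap K₀)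
      → c₀ = d₀ ∧ c₁ = d₁ ∧ c₂ = d₂ ∧ c₃ = d₃ := by
    intro c₀ c₁ c₂ c₃ d₀ d₁ d₂ d₃ hq
    have e0 := congrArg QuaternionAlgebra.re hq
    rw [Xre, Xre] at e0
    have e1 := congrArg QuaternionAlgebra.imI hq
    rw [XimI, XimI] at e1
    have e2 := congrArg QuaternionAlgebra.imJ hq
    rw [XimJ, XimJ] at e2
    have e3 := congrArg QuaternionAlgebra.imK hq
    rw [XimK, XimK] at e3
    refine ⟨e0, ?_, ?_, ?_⟩
    · linear_combination (algebraMap ℝ A i1)*e1 + (algebraMap ℝ A i2)*e2 + (algebraMap ℝ A i3)*e3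
        - (c₁-d₁)*Chii - (c₂-d₂)*Chij - (c₃-d₃)*Chik
    · linear_combination (algebraMap ℝ A j1)*e1 + (algebraMap ℝ A j2)*e2 + (algebraMap ℝ A j3)*e3
        - (c₁-d₁)*Chij - (c₂-d₂)*Chjj - (c₃-d₃)*Chjk
    · linear_combination (algebraMap ℝ A k1)*e1 + (algebraMap ℝ A k2)*e2 + (algebraMap ℝ A k3)*e3
        - (c₁-d₁)*Chik - (c₂-d₂)*Chjk - (c₃-d₃)*Chkk
  -- M₀ over A
  have qM : (qmap M₀ : Quaternion A) = (↑(algebraMap ℝ A a) : Quaternion A) * qmap I₀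
      + (↑(algebraMap ℝ A b) : Quaternion A) * qmap J₀ := by
    rw [hM0]
    ext <;> simp [hre, hJ0re, ← di1, ← di2, ← di3, ← dj1, ← dj2, ← dj3, mul_comm]
  have slicedForm : ∀ α β : A, ((↑α : Quaternion A) + (↑β : Quaternion A) * qmap M₀)
      = (↑α : Quaternion A) + (↑(β * algebraMap ℝ A a) : Quaternion A) * qmap I₀
        + (↑(β * algebraMap ℝ A b) : Quaternion A) * qmap J₀
        + (↑(0:A) : Quaternion A) * qmap K₀ := by
    intro α β
    rw [qM, mul_add, ← mul_assoc, ← mul_assoc, ← Quaternion.coe_mul, ← Quaternion.coe_mul]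
    simp [add_assoc]
  -- nonvanishing facts
  have hCinj : Function.Injective (algebraMap ℝ A) := RingHom.injective _
  have hCne : ∀ x : ℝ, x ≠ 0 → algebraMap ℝ A x ≠ 0 := by
    intro x hx hc
    exact hx (hCinj (by rw [hc, map_zero]))
  have hCa : algebraMap ℝ A a ≠ 0 := hCne a hanz
  have hCb : algebraMap ℝ A b ≠ 0 := hCne b hbne
  have h2bne : (2*b : ℝ) ≠ 0 := by positivity
  have hC2b : algebraMap ℝ A (2*b) ≠ 0 := hCne _ h2bne
  have A1 : algebraMap ℝ A a * algebraMap ℝ A a⁻¹ = 1 := by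
    rw [← map_mul, mul_inv_cancel₀ hanz, map_one]
  have B1 : algebraMap ℝ A b * algebraMap ℝ A b⁻¹ = 1 := by
    rw [← map_mul, mul_inv_cancel₀ hbne, map_one]
  have B2 : algebraMap ℝ A (2*b) * algebraMap ℝ A (2*b)⁻¹ = 1 := by
    rw [← map_mul, mul_inv_cancel₀ h2bne, map_one]
  have hC2bsplit : algebraMap ℝ A (2*b) = 2 * algebraMap ℝ A b := by
    rw [map_mul, map_ofNat]
  have hsne : h₀^2 + h₁^2 ≠ 0 := by
    intro hzero
    exact hh₁ (hFR h₀ h₁ 0 0 (by linear_combination hzero)).2.1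
  -- ## main equivalence
  constructor
  · rintro ⟨α, β, hsl⟩
    rw [hdec, hprodgen, slicedForm] at hsl
    obtain ⟨e0, e1, e2, e3⟩ := uniq _ _ _ _ _ _ _ _ hsl
    have E1 : algebraMap ℝ A b * ((h₀^2+h₁^2)*φ1)
        = algebraMap ℝ A a * ((h₀^2-h₁^2)*φ2 - 2*h₀*h₁*φ3) := by
      linear_combination (algebraMap ℝ A b)*e1 - (algebraMap ℝ A a)*e2
    refine ⟨f.re, algebraMap ℝ A a⁻¹ * φ1, algebraMap ℝ A b⁻¹ * φ2,
      -(algebraMap ℝ A (2*b)⁻¹ * φ3), ?_, ?_, ?_⟩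
    · have S1 : algebraMap ℝ A a * ((h₀^2+h₁^2)*φ2)
          = algebraMap ℝ A b * (φ1*(h₀^2-h₁^2)) := by
        apply mul_left_cancel₀ hsne
        linear_combination (-(h₀^2-h₁^2))*E1 + 2*(algebraMap ℝ A a)*h₀*h₁*e3
      have G1 : (algebraMap ℝ A a * algebraMap ℝ A b) * ((h₀^2+h₁^2) * (algebraMap ℝ A b⁻¹ * φ2))
          = (algebraMap ℝ A a * algebraMap ℝ A b) * ((algebraMap ℝ A a⁻¹ * φ1) * (h₀^2-h₁^2)) := by
        linear_combination (algebraMap ℝ A a*(h₀^2+h₁^2)*φ2)*B1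
          - (algebraMap ℝ A b*φ1*(h₀^2-h₁^2))*A1 + S1
      exact mul_left_cancel₀ (mul_ne_zero hCa hCb) G1
    · have S2 : algebraMap ℝ A a * ((h₀^2+h₁^2)*φ3) = -(2*(algebraMap ℝ A b*(φ1*h₀*h₁))) := by
        apply mul_left_cancel₀ hsne
        linear_combination (2*h₀*h₁)*E1 + (algebraMap ℝ A a*(h₀^2-h₁^2))*e3
      have G2 : (algebraMap ℝ A a * algebraMap ℝ A (2*b))
            * ((h₀^2+h₁^2) * -(algebraMap ℝ A (2*b)⁻¹ * φ3))
          = (algebraMap ℝ A a * algebraMap ℝ A (2*b))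
            * ((algebraMap ℝ A a⁻¹ * φ1) * h₀ * h₁) := by
        linear_combination (-(algebraMap ℝ A a)*(h₀^2+h₁^2)*φ3)*B2
          - (algebraMap ℝ A (2*b)*φ1*h₀*h₁)*A1 - S2
          - (φ1*h₀*h₁)*hC2bsplit
      exact mul_left_cancel₀ (mul_ne_zero hCa hC2b) G2
    · have ea : algebraMap ℝ A a * (algebraMap ℝ A a⁻¹ * φ1) = φ1 := by
        linear_combination φ1*A1
      have eb : algebraMap ℝ A b * (algebraMap ℝ A b⁻¹ * φ2) = φ2 := by
        linear_combination φ2*B1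
      have ec : 2 * (algebraMap ℝ A b * -(algebraMap ℝ A (2*b)⁻¹ * φ3)) = -φ3 := by
        linear_combination (-φ3)*B2 + (algebraMap ℝ A (2*b)⁻¹*φ3)*hC2bsplit
      rw [ea, eb, ec, Quaternion.coe_neg, neg_mul, sub_neg_eq_add]
      exact hdec
  · rintro ⟨f₀, ρ, u, w, hu, hw, hfeq⟩
    have hfeq' : f = (↑f₀ : Quaternion A)
        + (↑(algebraMap ℝ A a * ρ) : Quaternion A) * qmap I₀
        + (↑(algebraMap ℝ A b * u) : Quaternion A) * qmap J₀
        + (↑(-(2 * (algebraMap ℝ A b * w))) : Quaternion A) * qmap K₀ := by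
      rw [hfeq, Quaternion.coe_neg, neg_mul, sub_eq_add_neg]
    refine ⟨(h₀^2+h₁^2)*f₀, (h₀^2+h₁^2)*ρ, ?_⟩
    rw [hfeq', hprodgen, slicedForm]
    have q1 : (h₀^2+h₁^2)*(algebraMap ℝ A a*ρ) = ((h₀^2+h₁^2)*ρ)*algebraMap ℝ A a := by ring
    have q2 : (h₀^2-h₁^2)*(algebraMap ℝ A b*u) - 2*h₀*h₁*(-(2*(algebraMap ℝ A b*w)))
        = ((h₀^2+h₁^2)*ρ)*algebraMap ℝ A b := by
      apply mul_left_cancel₀ hsne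
      linear_combination ((h₀^2-h₁^2)*algebraMap ℝ A b)*hu + (4*h₀*h₁*algebraMap ℝ A b)*hw
    have q3 : (h₀^2-h₁^2)*(-(2*(algebraMap ℝ A b*w))) + 2*h₀*h₁*(algebraMap ℝ A b*u) = (0:A) := by
      apply mul_left_cancel₀ hsne
      linear_combination (2*h₀*h₁*algebraMap ℝ A b)*hu - (2*(h₀^2-h₁^2)*algebraMap ℝ A b)*hw
    rw [q1, q2, q3]
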